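/- Let X be a real Banach space, (Ω, Σ, μ) a complete probability space, and W a weakly compact subset of X. Let (g_m)_{m≥1} be a sequence in L_∞(μ,W) and let g_∞ : Ω → X be such that for almost every s ∈ Ω the sequence (g_m(s))_{m≥1} converges weakly in X to g_∞(s). Then g_∞ ∈ L_∞(μ,W); in particular g_∞ is strongly measurable, essentially bounded, and g_∞(s) ∈ W for almost every s ∈ Ω. -/

import Mathlib

open MeasureTheory Filter Topology Set TopologicalSpace

section aux
variable {X : Type*} [NormedAddCommGroup X] [NormedSpace ℝ X]

lemma norm_eq_iSup_aux (Y : Submodule ℝ X) (d : ℕ → X)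
    (hdense : ∀ z ∈ Y, ∀ ε > (0:ℝ), ∃ k, ‖d k - z‖ < ε)
    (Φ : ℕ → X →L[ℝ] ℝ) (hΦ1 : ∀ k, ‖Φ k‖ ≤ 1) (hΦ2 : ∀ k, Φ k (d k) = ‖d k‖)
    {z : X} (hz : z ∈ Y) : ‖z‖ = ⨆ k, Φ k z := by
  have key : ∀ k (x : X), Φ k x ≤ ‖x‖ := by
    intro k x
    calc Φ k x ≤ |Φ k x| := le_abs_self _
    _ = ‖Φ k x‖ := rfl
    _ ≤ ‖Φ k‖ * ‖x‖ := (Φ k).le_opNorm x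
    _ ≤ 1 * ‖x‖ := by gcongr; exact hΦ1 k
    _ = ‖x‖ := one_mul _
  have bdd : BddAbove (Set.range fun k => Φ k z) :=
    ⟨‖z‖, by rintro - ⟨k, rfl⟩; exact key k z⟩
  refine le_antisymm ?_ (ciSup_le fun k => key k z)
  refine le_of_forall_pos_le_add fun ε hε => ?_
  obtain ⟨k, hk⟩ := hdense z hz (ε/2) (by positivity)
  have h2 : Φ k (d k - z) ≤ ‖d k - z‖ := key k _
  have h3 : Φ k z = ‖d k‖ - Φ k (d k - z) := by
    rw [map_sub, hΦ2]; ring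
  have h4 : ‖z‖ - ‖d k - z‖ ≤ ‖d k‖ := by
    linarith [norm_sub_norm_le z (d k), (norm_sub_rev z (d k)).le]
  have h5 : ‖z‖ - ε ≤ Φ k z := by
    rw [h3]; linarith
  have h6 := le_ciSup bdd k
  linarith

lemma bounded_of_weakCompact [CompleteSpace X] {W : Set X}
    (hW : IsCompact (toWeakSpace ℝ X '' W)) : ∃ C, ∀ x ∈ W, ‖x‖ ≤ C := by
  have hpt : ∀ φ : X →L[ℝ] ℝ, ∃ C, ∀ w : W,
      ‖(NormedSpace.inclusionInDoubleDual ℝ X (w : X)) φ‖ ≤ C := by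
    intro φ
    have hcont : Continuous fun y : WeakSpace ℝ X => (topDualPairing ℝ X).flip y φ :=
      WeakBilin.eval_continuous _ φ
    have hcomp : IsCompact ((fun y : WeakSpace ℝ X => (topDualPairing ℝ X).flip y φ) ''
        (toWeakSpace ℝ X '' W)) := hW.image hcont
    obtain ⟨C, hC⟩ := isBounded_iff_forall_norm_le.1 hcomp.isBounded
    refine ⟨C, fun w => ?_⟩
    have : (NormedSpace.inclusionInDoubleDual ℝ X (w : X)) φ
        = (fun y : WeakSpace ℝ X => (topDualPairing ℝ X).flip y φ) (toWeakSpace ℝ X (w : X)) := rfl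
    rw [this]
    exact hC _ (Set.mem_image_of_mem _ (Set.mem_image_of_mem _ w.2))
  obtain ⟨C, hC⟩ := banach_steinhaus hpt
  refine ⟨C, fun x hx => ?_⟩
  have := hC ⟨x, hx⟩
  have heq : ‖(NormedSpace.inclusionInDoubleDual ℝ X) x‖ = ‖x‖ :=
    (NormedSpace.inclusionInDoubleDualLi ℝ (E := X)).norm_map x
  rwa [heq] at this

lemma pairing_inj : Function.Injective ((topDualPairing ℝ X).flip) := by
  intro x y h
  rw [← sub_eq_zero, NormedSpace.eq_zero_iff_forall_dual_eq_zero ℝ (x - y)]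
  intro φ
  have : (topDualPairing ℝ X).flip x φ = (topDualPairing ℝ X).flip y φ := by rw [h]
  simp only [LinearMap.flip_apply, topDualPairing_apply] at this
  simp [map_sub, this]

lemma mem_of_weak_lim_aux {A : Set X} (hA : IsClosed (toWeakSpace ℝ X '' A))
    (a : ℕ → X) (ha : ∀ m, a m ∈ A) (x : X)
    (hx : ∀ φ : X →L[ℝ] ℝ, Tendsto (fun m => φ (a m)) atTop (nhds (φ x))) : x ∈ A := by
  have htend : Tendsto (fun m => toWeakSpace ℝ X (a m)) atTop (nhds (toWeakSpace ℝ X x)) := by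
    refine (WeakBilin.tendsto_iff_forall_eval_tendsto (B := (topDualPairing ℝ X).flip) pairing_inj).2 ?_
    intro φ
    exact hx φ
  have hmem : toWeakSpace ℝ X x ∈ toWeakSpace ℝ X '' A :=
    hA.mem_of_tendsto htend (Eventually.of_forall fun m => Set.mem_image_of_mem _ (ha m))
  obtain ⟨x', hx', heq⟩ := hmem
  rwa [← (toWeakSpace ℝ X).injective heq]

end aux

/-- If a sequence in `L_∞(μ,W)`, with `W` weakly compact, converges weakly
pointwise a.e. to `g_∞`, then `g_∞ ∈ L_∞(μ,W)`. -/
theorem ae_weak_limit_mem_Linf_of_weakly_compact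
    {X : Type*} [NormedAddCommGroup X] [NormedSpace ℝ X] [CompleteSpace X]
    {Ω : Type*} [MeasurableSpace Ω] (μ : Measure Ω)
    [IsProbabilityMeasure μ] [μ.IsComplete]
    (W : Set X) (hW : IsCompact (toWeakSpace ℝ X '' W))
    (g : ℕ → Ω → X)
    (hg : ∀ m, MemLp (g m) ⊤ μ ∧ ∀ᵐ s ∂μ, g m s ∈ W)
    (g_inf : Ω → X)
    (hconv : ∀ᵐ s ∂μ, ∀ φ : X →L[ℝ] ℝ,
      Tendsto (fun m => φ (g m s)) atTop (nhds (φ (g_inf s)))) :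
    MemLp g_inf ⊤ μ ∧ ∀ᵐ s ∂μ, g_inf s ∈ W := by
  classical
  borelize X
  -- measurable representatives
  have hf_asm : ∀ m, AEStronglyMeasurable (g m) μ := fun m => (hg m).1.aestronglyMeasurable
  set f : ℕ → Ω → X := fun m => (hf_asm m).mk (g m) with hfdef
  have hf_sm : ∀ m, StronglyMeasurable (f m) := fun m => (hf_asm m).stronglyMeasurable_mk
  have hf_ae : ∀ᵐ s ∂μ, ∀ m, g m s = f m s := ae_all_iff.2 fun m => (hf_asm m).ae_eq_mk
  set S : Set X := ⋃ m, Set.range (f m) with hSdef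
  have hS_sep : IsSeparable S := IsSeparable.iUnion fun m => (hf_sm m).isSeparable_range
  set Y : Submodule ℝ X := (Submodule.span ℝ S).topologicalClosure with hYdef
  have hYcoe : (Y : Set X) = closure ((Submodule.span ℝ S : Submodule ℝ X) : Set X) := rfl
  have hYsep : IsSeparable (Y : Set X) := by
    rw [hYcoe]; exact hS_sep.span.closure
  have hYclosed : IsClosed (Y : Set X) := Submodule.isClosed_topologicalClosure _
  -- weak closedness of Y and W
  have hYw : IsClosed (toWeakSpace ℝ X '' (Y : Set X)) := by
    have h := Y.convex.toWeakSpace_closure (𝕜 := ℝ)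
    rw [hYclosed.closure_eq] at h
    rw [h]
    exact isClosed_closure
  have hT2 : T2Space (WeakSpace ℝ X) := (WeakBilin.isEmbedding pairing_inj).t2Space
  have hWclosed : IsClosed (toWeakSpace ℝ X '' W) := hW.isClosed
  -- a.e. membership in W
  have hmemW : ∀ᵐ s ∂μ, g_inf s ∈ W := by
    filter_upwards [hconv, ae_all_iff.2 fun m => (hg m).2] with s hs hWs
    exact mem_of_weak_lim_aux hWclosed (fun m => g m s) hWs (g_inf s) hs
  -- a.e. membership in Y
  have hmemY : ∀ᵐ s ∂μ, g_inf s ∈ (Y : Set X) := by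
    filter_upwards [hconv, hf_ae] with s hs hfs
    refine mem_of_weak_lim_aux hYw (fun m => g m s) (fun m => ?_) (g_inf s) hs
    show g m s ∈ (Y : Set X)
    rw [hfs m]
    exact subset_closure (Submodule.subset_span (Set.mem_iUnion.2 ⟨m, Set.mem_range_self s⟩))
  -- dense sequence in Y
  haveI : Nonempty (Y : Set X) := ⟨⟨0, Y.zero_mem⟩⟩
  haveI := hYsep.separableSpace
  obtain ⟨u, hu⟩ := TopologicalSpace.exists_dense_seq (Y : Set X)
  set d : ℕ → X := fun k => (u k : X) with hddef
  have hd_mem : ∀ k, d k ∈ Y := fun k => (u k).2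
  have hdense : ∀ z ∈ Y, ∀ ε > (0:ℝ), ∃ k, ‖d k - z‖ < ε := by
    intro z hz ε hε
    obtain ⟨k, hk⟩ := Metric.denseRange_iff.1 hu ⟨z, hz⟩ ε hε
    refine ⟨k, ?_⟩
    rw [Subtype.dist_eq, dist_eq_norm] at hk
    rwa [norm_sub_rev]
  -- norming functionals
  choose Φ hΦ1 hΦ2 using fun k => exists_dual_vector'' ℝ (d k)
  -- AEMeasurable of compositions with functionals
  have hφmeas : ∀ φ : X →L[ℝ] ℝ, AEMeasurable (fun s => φ (g_inf s)) μ := by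
    intro φ
    refine aemeasurable_of_tendsto_metrizable_ae' (f := fun m s => φ (g m s))
      (fun m => φ.continuous.measurable.comp_aemeasurable (hf_asm m).aemeasurable) ?_
    filter_upwards [hconv] with s hs using hs φ
  -- a.e. measurability of distances to the d n
  have hq : ∀ n, AEMeasurable (fun s => ‖g_inf s - d n‖) μ := by
    intro n
    have h1 : AEMeasurable (fun s => ⨆ k, (Φ k (g_inf s) - Φ k (d n))) μ :=
      AEMeasurable.iSup fun k => (hφmeas (Φ k)).sub aemeasurable_const
    refine h1.congr ?_
    filter_upwards [hmemY] with s hs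
    have hzmem : g_inf s - d n ∈ Y := Y.sub_mem hs (hd_mem n)
    simp only [← map_sub]
    exact (norm_eq_iSup_aux Y d hdense Φ hΦ1 (fun k => hΦ2 k) hzmem).symm
  -- good set and measurable null superset of its complement
  have hgood : ∀ᵐ s ∂μ, g_inf s ∈ (Y : Set X) ∧ ∀ n, (hq n).mk _ s = ‖g_inf s - d n‖ := by
    filter_upwards [hmemY, ae_all_iff.2 fun n => (hq n).ae_eq_mk] with s h1 h2
    exact ⟨h1, fun n => (h2 n).symm⟩
  obtain ⟨N, hNsub, hNmeas, hNnull⟩ := exists_measurable_superset_of_null (ae_iff.1 hgood)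
  have hNc : ∀ s, s ∉ N →
      g_inf s ∈ (Y : Set X) ∧ ∀ n, (hq n).mk _ s = ‖g_inf s - d n‖ := by
    intro s hs
    by_contra h
    exact hs (hNsub h)
  have haemeas : AEMeasurable g_inf μ := by
    apply aemeasurable_of_unif_approx
    intro ε hε
    set p : Ω → ℕ → Prop := fun s n => ((hq n).mk _ s < ε) ∨ (n = 0 ∧ s ∈ N) with hpdef
    have hp_meas : ∀ n, MeasurableSet {s | p s n} := by
      intro n
      have h1 : MeasurableSet {s | (hq n).mk _ s < ε} :=
        (hq n).measurable_mk measurableSet_Iio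
      have h2 : MeasurableSet {s : Ω | n = 0 ∧ s ∈ N} := by
        rcases Nat.eq_zero_or_pos n with h | h
        · subst h; simpa using hNmeas
        · have : {s : Ω | n = 0 ∧ s ∈ N} = ∅ := by
            ext s; simp [Nat.pos_iff_ne_zero.1 h]
          rw [this]; exact MeasurableSet.empty
      have : {s | p s n} = {s | (hq n).mk _ s < ε} ∪ {s : Ω | n = 0 ∧ s ∈ N} := by
        ext s; simp [hpdef]
      rw [this]
      exact h1.union h2
    have hp_ex : ∀ s, ∃ n, p s n := by
      intro s
      by_cases hsN : s ∈ N
      · exact ⟨0, Or.inr ⟨rfl, hsN⟩⟩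
      · obtain ⟨hY, hmk⟩ := hNc s hsN
        obtain ⟨k, hk⟩ := hdense _ hY ε hε
        refine ⟨k, Or.inl ?_⟩
        rw [hmk k, norm_sub_rev]
        exact hk
    refine ⟨fun s => d (Nat.find (hp_ex s)), Measurable.aemeasurable ?_, ?_⟩
    · exact (measurable_from_nat (f := d)).comp (measurable_find hp_ex hp_meas)
    filter_upwards [compl_mem_ae_iff.2 hNnull] with s hsN
    rcases Nat.find_spec (hp_ex s) with h | h
    · obtain ⟨hY, hmk⟩ := hNc s hsN
      rw [hmk _] at h
      rw [dist_eq_norm, norm_sub_rev]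
      exact h.le
    · exact absurd h.2 hsN
  have hsm : AEStronglyMeasurable g_inf μ :=
    aestronglyMeasurable_iff_aemeasurable_separable.2 ⟨haemeas, (Y : Set X), hYsep, hmemY⟩
  obtain ⟨C, hC⟩ := bounded_of_weakCompact hW
  exact ⟨memLp_top_of_bound hsm C (by filter_upwards [hmemW] with s hs using hC _ hs), hmemW⟩
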